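/- Let T and S be A-positive operators on H (i.e., AT ≥ 0 and AS ≥ 0). Then the 𝔸-numerical radius of the off-diagonal matrix [[0, T],[S, 0]] on H⊕H equals (1/2)‖T + S‖_A. -/

import Mathlib

open ContinuousLinearMap

/-- The `A`-seminorm of a vector: `‖x‖_A = √⟨Ax, x⟩`. -/
noncomputable def vnormA {H : Type*} [NormedAddCommGroup H] [InnerProductSpace ℂ H]
    (A : H →L[ℂ] H) (x : H) : ℝ :=
  Real.sqrt (RCLike.re (inner ℂ (A x) x : ℂ))

/-- `T` is `A`-bounded, i.e. `T ∈ B_{A^{1/2}}(H)`. -/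
def ABounded {H : Type*} [NormedAddCommGroup H] [InnerProductSpace ℂ H]
    (A T : H →L[ℂ] H) : Prop :=
  ∃ c : ℝ, 0 < c ∧ ∀ x, vnormA A (T x) ≤ c * vnormA A x

/-- The `A`-operator seminorm `‖T‖_A = sup{‖Tx‖_A : ‖x‖_A = 1}`. -/
noncomputable def opNormA {H : Type*} [NormedAddCommGroup H] [InnerProductSpace ℂ H]
    (A T : H →L[ℂ] H) : ℝ :=
  sSup {c : ℝ | ∃ x : H, vnormA A x = 1 ∧ c = vnormA A (T x)}

/-- The `A`-numerical radius `ω_A(T) = sup{|⟨ATx, x⟩| : ‖x‖_A = 1}`. -/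
noncomputable def wA {H : Type*} [NormedAddCommGroup H] [InnerProductSpace ℂ H]
    (A T : H →L[ℂ] H) : ℝ :=
  sSup {c : ℝ | ∃ x : H, vnormA A x = 1 ∧ c = ‖(inner ℂ (A (T x)) x : ℂ)‖}

/-- `Ts` is the reduced (Douglas) solution of `AX = T*A`, i.e. `Ts = T^{♯_A}`. -/
def IsReducedAdjoint {H : Type*} [NormedAddCommGroup H] [InnerProductSpace ℂ H]
    [CompleteSpace H] (A T Ts : H →L[ℂ] H) : Prop :=
  A ∘L Ts = (ContinuousLinearMap.adjoint T) ∘L A ∧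
    ∀ y, Ts y ∈ closure (Set.range A)

/-- The `2 × 2` operator matrix `[[P, Q], [R, S]]` acting on `H ⊕ H` (with the `ℓ²` product
inner ℂ product). -/
noncomputable def blk {H : Type*} [NormedAddCommGroup H] [InnerProductSpace ℂ H]
    (P Q R S : H →L[ℂ] H) : WithLp 2 (H × H) →L[ℂ] WithLp 2 (H × H) :=
  letI e := (WithLp.prodContinuousLinearEquiv 2 ℂ H H)
  (e.symm.toContinuousLinearMap) ∘L
    ((P.comp (fst ℂ H H) + Q.comp (snd ℂ H H)).prod
      (R.comp (fst ℂ H H) + S.comp (snd ℂ H H))) ∘L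
    (e.toContinuousLinearMap)

/-- `𝔸 = diag(A, A)` on `H ⊕ H`. -/
noncomputable def AA {H : Type*} [NormedAddCommGroup H] [InnerProductSpace ℂ H]
    (A : H →L[ℂ] H) : WithLp 2 (H × H) →L[ℂ] WithLp 2 (H × H) :=
  blk A 0 0 A

section Aux

open RCLike

variable {H : Type*} [NormedAddCommGroup H] [InnerProductSpace ℂ H]

lemma vnormA_nonneg (A : H →L[ℂ] H) (x : H) : 0 ≤ vnormA A x := Real.sqrt_nonneg _

lemma vnormA_smul (A : H →L[ℂ] H) (c : ℂ) (x : H) :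
    vnormA A (c • x) = ‖c‖ * vnormA A x := by
  have h : (inner ℂ (A (c • x)) (c • x) : ℂ) = ((‖c‖ ^ 2 : ℝ) : ℂ) * inner ℂ (A x) x := by
    rw [map_smul, inner_smul_left, inner_smul_right, ← mul_assoc, RCLike.conj_mul]
    norm_cast
  rw [vnormA, h,
    show (re (((‖c‖ ^ 2 : ℝ) : ℂ) * (inner ℂ (A x) x : ℂ)) : ℝ)
        = ‖c‖ ^ 2 * re (inner ℂ (A x) x : ℂ) from Complex.re_ofReal_mul _ _,
    Real.sqrt_mul (sq_nonneg _), Real.sqrt_sq (norm_nonneg _)]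
  rfl

lemma sqrt2cs {a b c d : ℝ} (ha : 0 ≤ a) (hb : 0 ≤ b) (hc : 0 ≤ c) (hd : 0 ≤ d) :
    Real.sqrt a * Real.sqrt b + Real.sqrt c * Real.sqrt d ≤
      Real.sqrt (a + c) * Real.sqrt (b + d) := by
  have h1 := Real.sq_sqrt ha; have h2 := Real.sq_sqrt hb
  have h3 := Real.sq_sqrt hc; have h4 := Real.sq_sqrt hd
  have h5 := Real.sq_sqrt (add_nonneg ha hc); have h6 := Real.sq_sqrt (add_nonneg hb hd)
  have n1 := Real.sqrt_nonneg a; have n2 := Real.sqrt_nonneg b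
  have n3 := Real.sqrt_nonneg c; have n4 := Real.sqrt_nonneg d
  have n5 := Real.sqrt_nonneg (a + c); have n6 := Real.sqrt_nonneg (b + d)
  nlinarith [sq_nonneg (Real.sqrt a * Real.sqrt d - Real.sqrt c * Real.sqrt b),
    sq_nonneg (Real.sqrt a * Real.sqrt b + Real.sqrt c * Real.sqrt d),
    sq_nonneg (Real.sqrt (a+c) * Real.sqrt (b+d)
      - (Real.sqrt a * Real.sqrt b + Real.sqrt c * Real.sqrt d)),
    mul_nonneg (mul_nonneg n1 n2) (mul_nonneg n3 n4),
    mul_nonneg n5 n6]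

variable [CompleteSpace H]

/-- Cauchy–Schwarz for the semi-inner ℂ product induced by a positive operator. -/
lemma cs_pos {P : H →L[ℂ] H} (hP : P.IsPositive) (x y : H) :
    ‖(inner ℂ (P x) y : ℂ)‖ ≤
      Real.sqrt (re (inner ℂ (P x) x : ℂ)) * Real.sqrt (re (inner ℂ (P y) y : ℂ)) := by
  letI c : PreInnerProductSpace.Core ℂ H :=
  { inner := fun u v => inner ℂ (P u) v
    conj_inner_symm := fun u v => by
      simp only [inner_conj_symm]
      exact (hP.1 u v).symm
    re_inner_nonneg := hP.2
    add_left := fun u v w => by simp [inner_add_left]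
    smul_left := fun u v r => by simp [inner_smul_left, mul_comm] }
  have h := @InnerProductSpace.Core.inner_mul_inner_self_le ℂ H _ _ _ c x y
  change ‖(inner ℂ (P x) y : ℂ)‖ * ‖(inner ℂ (P y) x : ℂ)‖ ≤
      re (inner ℂ (P x) x : ℂ) * re (inner ℂ (P y) y : ℂ) at h
  have hsym : ‖(inner ℂ (P y) x : ℂ)‖ = ‖(inner ℂ (P x) y : ℂ)‖ := by
    rw [norm_inner_symm]
    exact congrArg norm (hP.1 x y).symm
  rw [hsym] at h
  have h2 : ‖(inner ℂ (P x) y : ℂ)‖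
      = Real.sqrt (‖(inner ℂ (P x) y : ℂ)‖ * ‖(inner ℂ (P x) y : ℂ)‖) :=
    (Real.sqrt_mul_self (norm_nonneg _)).symm
  rw [h2, ← Real.sqrt_mul (hP.re_inner_nonneg_left x)]
  exact Real.sqrt_le_sqrt h

lemma cs_A {A : H →L[ℂ] H} (hA : A.IsPositive) (x y : H) :
    ‖(inner ℂ (A x) y : ℂ)‖ ≤ vnormA A x * vnormA A y := cs_pos hA x y

lemma vnormA_sq {A : H →L[ℂ] H} (hA : A.IsPositive) (x : H) :
    vnormA A x ^ 2 = re (inner ℂ (A x) x : ℂ) :=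
  Real.sq_sqrt (hA.re_inner_nonneg_left x)

/-- An `A`-positive operator is `A`-bounded, with `A`-norm at most `‖R‖` (Reid-type
inequality, proved via a log-convexity iteration). -/
lemma abound {A : H →L[ℂ] H} (hA : A.IsPositive) {R : H →L[ℂ] H}
    (hR : (A ∘L R).IsPositive) (y : H) :
    vnormA A (R y) ≤ ‖R‖ * vnormA A y := by
  set m : ℕ → ℝ := fun k => vnormA A ((R ^ k) y) with hm
  have hm0 : ∀ k, 0 ≤ m k := fun k => vnormA_nonneg _ _
  have hpow : ∀ k, (R ^ (k + 1)) y = R ((R ^ k) y) := by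
    intro k; rw [pow_succ']; rfl
  have step : ∀ z : H, vnormA A (R z) ^ 2 ≤ vnormA A z * vnormA A (R (R z)) := by
    intro z
    have e1 : vnormA A (R z) ^ 2 = re (inner ℂ (A (R z)) (R z) : ℂ) := vnormA_sq hA _
    have e2 : re (inner ℂ (A (R z)) (R z) : ℂ) ≤ ‖(inner ℂ ((A ∘L R) z) (R z) : ℂ)‖ := by
      rw [comp_apply]; exact RCLike.re_le_norm _
    have e3 := cs_pos hR z (R z)
    have e4 : re (inner ℂ ((A ∘L R) z) z : ℂ) ≤ vnormA A (R z) * vnormA A z := by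
      rw [comp_apply]
      exact (RCLike.re_le_norm _).trans (cs_A hA (R z) z)
    have e5 : re (inner ℂ ((A ∘L R) (R z)) (R z) : ℂ)
        ≤ vnormA A (R (R z)) * vnormA A (R z) := by
      rw [comp_apply]
      exact (RCLike.re_le_norm _).trans (cs_A hA (R (R z)) (R z))
    have e6 : vnormA A (R z) ^ 2 ≤
        Real.sqrt (vnormA A (R z) * vnormA A z) *
          Real.sqrt (vnormA A (R (R z)) * vnormA A (R z)) := by
      refine (e1.le.trans (e2.trans (e3.trans ?_)))
      exact mul_le_mul (Real.sqrt_le_sqrt e4) (Real.sqrt_le_sqrt e5)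
        (Real.sqrt_nonneg _) (Real.sqrt_nonneg _)
    by_cases hz : vnormA A (R z) = 0
    · rw [hz]; norm_num
      exact mul_nonneg (vnormA_nonneg _ _) (vnormA_nonneg _ _)
    · have hzpos : 0 < vnormA A (R z) := (vnormA_nonneg _ _).lt_of_ne (Ne.symm hz)
      have e7 : (vnormA A (R z) ^ 2) ^ 2 ≤
          (vnormA A (R z) * vnormA A z) * (vnormA A (R (R z)) * vnormA A (R z)) := by
        calc (vnormA A (R z) ^ 2) ^ 2
            ≤ (Real.sqrt (vnormA A (R z) * vnormA A z) *
                Real.sqrt (vnormA A (R (R z)) * vnormA A (R z))) ^ 2 := by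
              apply pow_le_pow_left₀ (sq_nonneg _) e6
          _ = _ := by
              rw [mul_pow, Real.sq_sqrt (mul_nonneg (vnormA_nonneg _ _) (vnormA_nonneg _ _)),
                Real.sq_sqrt (mul_nonneg (vnormA_nonneg _ _) (vnormA_nonneg _ _))]
      have e8 : (vnormA A (R z) ^ 2) * (vnormA A (R z) ^ 2) ≤
          (vnormA A z * vnormA A (R (R z))) * (vnormA A (R z) ^ 2) := by nlinarith [e7]
      exact (mul_le_mul_iff_of_pos_right (by positivity)).mp e8
  have conv : ∀ k, m (k + 1) ^ 2 ≤ m k * m (k + 2) := by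
    intro k
    have h := step ((R ^ k) y)
    rw [← hpow k, ← hpow (k + 1)] at h
    exact h
  have claimC : ∀ n, m 1 * m n ≤ m 0 * m (n + 1) := by
    intro n
    induction n with
    | zero => exact (mul_comm (m 1) (m 0)).le
    | succ n ih =>
      by_cases h0 : m 1 * m (n + 1) = 0
      · rw [h0]; exact mul_nonneg (hm0 0) (hm0 (n + 2))
      · have hpos : 0 < m 1 * m (n + 1) :=
          (mul_nonneg (hm0 1) (hm0 (n + 1))).lt_of_ne (Ne.symm h0)
        have h1 : m 1 ^ 2 * (m (n + 1) ^ 2) ≤ m 1 ^ 2 * (m n * m (n + 2)) :=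
          mul_le_mul_of_nonneg_left (conv n) (sq_nonneg _)
        have h2 : (m 1 * m n) * (m 1 * m (n + 2))
            ≤ (m 0 * m (n + 1)) * (m 1 * m (n + 2)) :=
          mul_le_mul_of_nonneg_right ih (mul_nonneg (hm0 1) (hm0 (n + 2)))
        have key : (m 1 * m (n + 1)) * (m 1 * m (n + 1))
            ≤ (m 0 * m (n + 2)) * (m 1 * m (n + 1)) := by nlinarith [h1, h2]
        exact (mul_le_mul_iff_of_pos_right hpos).mp key
  have claimD : ∀ n, m 1 ^ (n + 1) ≤ m 0 ^ n * m (n + 1) := by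
    intro n
    induction n with
    | zero => simp
    | succ n ih =>
      calc m 1 ^ (n + 2) = m 1 ^ (n + 1) * m 1 := by ring
        _ ≤ (m 0 ^ n * m (n + 1)) * m 1 := mul_le_mul_of_nonneg_right ih (hm0 1)
        _ = m 0 ^ n * (m 1 * m (n + 1)) := by ring
        _ ≤ m 0 ^ n * (m 0 * m (n + 2)) :=
            mul_le_mul_of_nonneg_left (claimC (n + 1)) (pow_nonneg (hm0 0) n)
        _ = m 0 ^ (n + 1) * m (n + 2) := by ring
  have hwk : ∀ k, ‖(R ^ k) y‖ ≤ ‖R‖ ^ k * ‖y‖ := by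
    intro k
    induction k with
    | zero => simp
    | succ k ih =>
      rw [hpow k, pow_succ]
      calc ‖R ((R ^ k) y)‖ ≤ ‖R‖ * ‖(R ^ k) y‖ := R.le_opNorm _
        _ ≤ ‖R‖ * (‖R‖ ^ k * ‖y‖) := mul_le_mul_of_nonneg_left ih (norm_nonneg R)
        _ = ‖R‖ ^ k * ‖R‖ * ‖y‖ := by ring
  have growth : ∀ k, m k ≤ Real.sqrt ‖A‖ * (‖R‖ ^ k * ‖y‖) := by
    intro k
    have h1 : re (inner ℂ (A ((R ^ k) y)) ((R ^ k) y) : ℂ) ≤ ‖A‖ * ‖(R ^ k) y‖ ^ 2 := by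
      refine (RCLike.re_le_norm _).trans ((norm_inner_le_norm _ _).trans ?_)
      calc ‖A ((R ^ k) y)‖ * ‖(R ^ k) y‖ ≤ (‖A‖ * ‖(R ^ k) y‖) * ‖(R ^ k) y‖ :=
            mul_le_mul_of_nonneg_right (A.le_opNorm _) (norm_nonneg _)
        _ = ‖A‖ * ‖(R ^ k) y‖ ^ 2 := by ring
    have h2 : m k ≤ Real.sqrt (‖A‖ * ‖(R ^ k) y‖ ^ 2) := Real.sqrt_le_sqrt h1
    rw [Real.sqrt_mul (norm_nonneg A), Real.sqrt_sq (norm_nonneg _)] at h2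
    refine h2.trans ?_
    exact mul_le_mul_of_nonneg_left (hwk k) (Real.sqrt_nonneg _)
  by_contra hlt
  push_neg at hlt
  rw [show R y = (R ^ 1) y by rw [pow_one], show vnormA A y = m 0 by simp [hm]] at hlt
  have h1pos : 0 < m 1 := lt_of_le_of_lt (mul_nonneg (norm_nonneg R) (hm0 0)) hlt
  have hm0pos : 0 < m 0 := by
    rcases (hm0 0).lt_or_eq with h | h
    · exact h
    · exfalso
      have := claimC 1
      rw [← h] at this
      nlinarith [h1pos]
  have hRpos : 0 < ‖R‖ := by
    rcases (norm_nonneg R).lt_or_eq with h | h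
    · exact h
    · exfalso
      have hR0 : R = 0 := by rwa [eq_comm, norm_eq_zero] at h
      have : m 1 = 0 := by simp [hm, hR0, pow_one, vnormA]
      linarith
  set q : ℝ := m 1 / (‖R‖ * m 0) with hqdef
  have hq1 : 1 < q := (one_lt_div (by positivity)).2 hlt
  obtain ⟨n, hn⟩ := pow_unbounded_of_one_lt (Real.sqrt ‖A‖ * ‖y‖ / m 0) hq1
  have key : q ^ (n + 1) ≤ Real.sqrt ‖A‖ * ‖y‖ / m 0 := by
    rw [hqdef, div_pow, div_le_div_iff₀ (by positivity) hm0pos]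
    have hD : m 1 ^ (n + 1) ≤ m 0 ^ n * (Real.sqrt ‖A‖ * (‖R‖ ^ (n + 1) * ‖y‖)) :=
      (claimD n).trans (mul_le_mul_of_nonneg_left (growth (n + 1)) (pow_nonneg (hm0 0) n))
    calc m 1 ^ (n + 1) * m 0
        ≤ (m 0 ^ n * (Real.sqrt ‖A‖ * (‖R‖ ^ (n + 1) * ‖y‖))) * m 0 :=
          mul_le_mul_of_nonneg_right hD hm0pos.le
      _ = Real.sqrt ‖A‖ * ‖y‖ * (‖R‖ * m 0) ^ (n + 1) := by rw [mul_pow]; ring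
  have hmono : q ^ n ≤ q ^ (n + 1) := pow_le_pow_right₀ hq1.le (Nat.le_succ n)
  linarith

lemma blk_fst (P Q R S : H →L[ℂ] H) (x : WithLp 2 (H × H)) :
    (blk P Q R S x).fst = P x.fst + Q x.snd := rfl

lemma blk_snd (P Q R S : H →L[ℂ] H) (x : WithLp 2 (H × H)) :
    (blk P Q R S x).snd = R x.fst + S x.snd := rfl

lemma innerAA (A : H →L[ℂ] H) (x : WithLp 2 (H × H)) :
    (inner ℂ ((AA A) x) x : ℂ) = inner ℂ (A x.fst) x.fst + inner ℂ (A x.snd) x.snd := by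
  have h : (inner ℂ ((AA A) x) x : ℂ)
      = inner ℂ (A x.fst + (0 : H →L[ℂ] H) x.snd) x.fst
        + inner ℂ ((0 : H →L[ℂ] H) x.fst + A x.snd) x.snd := rfl
  rw [h]; simp

lemma reAA (A : H →L[ℂ] H) (x : WithLp 2 (H × H)) :
    re (inner ℂ ((AA A) x) x : ℂ)
      = re (inner ℂ (A x.fst) x.fst : ℂ) + re (inner ℂ (A x.snd) x.snd : ℂ) := by
  rw [innerAA, map_add]

lemma innerAAM (A T S : H →L[ℂ] H) (x : WithLp 2 (H × H)) :
    (inner ℂ ((AA A) ((blk 0 T S 0) x)) x : ℂ)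
      = inner ℂ (A (T x.snd)) x.fst + inner ℂ (A (S x.fst)) x.snd := by
  have h : (inner ℂ ((AA A) ((blk 0 T S 0) x)) x : ℂ)
      = inner ℂ (A ((0 : H →L[ℂ] H) x.fst + T x.snd)
            + (0 : H →L[ℂ] H) (((blk 0 T S 0) x).snd)) x.fst
        + inner ℂ ((0 : H →L[ℂ] H) (((blk 0 T S 0) x).fst)
            + A (S x.fst + (0 : H →L[ℂ] H) x.snd)) x.snd := rfl
  rw [h]; simp

end Aux

/-- Build an element of `WithLp 2 (H × H)` from two vectors. -/
noncomputable def pairL2 {H : Type*} [NormedAddCommGroup H] [InnerProductSpace ℂ H]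
    (a b : H) : WithLp 2 (H × H) := (WithLp.equiv 2 (H × H)).symm (a, b)

theorem stmt5 {H : Type*} [NormedAddCommGroup H] [InnerProductSpace ℂ H] [CompleteSpace H]
    (A : H →L[ℂ] H) (hA : A.IsPositive)
    (T S : H →L[ℂ] H) (hT : (A ∘L T).IsPositive) (hS : (A ∘L S).IsPositive) :
    wA (AA A) (blk 0 T S 0) = (1 / 2) * opNormA A (T + S) := by
  have hAR : (A ∘L (T + S)).IsPositive := by rw [comp_add]; exact hT.add hS
  have hRb : ∀ w : H, vnormA A ((T + S) w) ≤ ‖T + S‖ * vnormA A w := abound hA hAR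
  unfold wA opNormA
  set E1 := {c : ℝ | ∃ x : WithLp 2 (H × H), vnormA (AA A) x = 1 ∧
      c = ‖(inner ℂ ((AA A) ((blk 0 T S 0) x)) x : ℂ)‖} with hE1
  set E2 := {c : ℝ | ∃ x : H, vnormA A x = 1 ∧ c = vnormA A ((T + S) x)} with hE2
  by_cases hall : ∀ w : H, vnormA A w = 0
  · have hz : ∀ w : H, RCLike.re (inner ℂ (A w) w : ℂ) = 0 := fun w => by
      have := hall w
      rwa [vnormA, Real.sqrt_eq_zero (hA.re_inner_nonneg_left w)] at this
    have hE2e : E2 = ∅ := by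
      rw [Set.eq_empty_iff_forall_notMem]
      rintro c ⟨x, h1, -⟩
      rw [hall x] at h1
      exact one_ne_zero h1.symm
    have hE1e : E1 = ∅ := by
      rw [Set.eq_empty_iff_forall_notMem]
      rintro c ⟨x, h1, -⟩
      rw [vnormA, reAA, hz x.fst, hz x.snd] at h1
      norm_num at h1
    rw [hE1e, hE2e, Real.sSup_empty]
    norm_num
  · push_neg at hall
    obtain ⟨w₀, hw₀⟩ := hall
    have tpos : 0 < vnormA A w₀ := (vnormA_nonneg A w₀).lt_of_ne (Ne.symm hw₀)
    have hy₁ : vnormA A ((((vnormA A w₀)⁻¹ : ℝ) : ℂ) • w₀) = 1 := by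
      rw [vnormA_smul, Complex.norm_real, Real.norm_eq_abs, abs_of_pos (inv_pos.2 tpos),
        inv_mul_cancel₀ (ne_of_gt tpos)]
    set y₁ := (((vnormA A w₀)⁻¹ : ℝ) : ℂ) • w₀ with hy₁def
    have E2nonneg : ∀ c ∈ E2, 0 ≤ c := by rintro c ⟨x, -, rfl⟩; exact vnormA_nonneg _ _
    have E2bdd : BddAbove E2 := by
      refine ⟨‖T + S‖, ?_⟩
      rintro c ⟨x, h1, rfl⟩
      simpa [h1] using hRb x
    have E2ne : E2.Nonempty := ⟨_, y₁, hy₁, rfl⟩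
    have hc2 : 0 ≤ sSup E2 := Real.sSup_nonneg E2nonneg
    have hRle : ∀ w, vnormA A ((T + S) w) ≤ sSup E2 * vnormA A w := by
      intro w
      by_cases h : vnormA A w = 0
      · have h0 : vnormA A ((T + S) w) ≤ 0 := by simpa [h] using hRb w
        rw [h, mul_zero]
        exact h0
      · have hpos : 0 < vnormA A w := (vnormA_nonneg A w).lt_of_ne (Ne.symm h)
        have hmem : vnormA A ((T + S) ((((vnormA A w)⁻¹ : ℝ) : ℂ) • w)) ∈ E2 := by
          refine ⟨_, ?_, rfl⟩
          rw [vnormA_smul, Complex.norm_real, Real.norm_eq_abs, abs_of_pos (inv_pos.2 hpos),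
            inv_mul_cancel₀ (ne_of_gt hpos)]
        have hle := le_csSup E2bdd hmem
        rw [map_smul, vnormA_smul, Complex.norm_real, Real.norm_eq_abs, abs_of_pos (inv_pos.2 hpos)] at hle
        calc vnormA A ((T + S) w)
            = vnormA A w * ((vnormA A w)⁻¹ * vnormA A ((T + S) w)) := by field_simp
          _ ≤ vnormA A w * sSup E2 := mul_le_mul_of_nonneg_left hle hpos.le
          _ = sSup E2 * vnormA A w := mul_comm _ _
    have gle : ∀ w : H, RCLike.re (inner ℂ (A ((T + S) w)) w : ℂ)
        ≤ sSup E2 * (vnormA A w * vnormA A w) := by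
      intro w
      refine (RCLike.re_le_norm _).trans ((cs_A hA ((T + S) w) w).trans ?_)
      calc vnormA A ((T + S) w) * vnormA A w
          ≤ (sSup E2 * vnormA A w) * vnormA A w :=
            mul_le_mul_of_nonneg_right (hRle w) (vnormA_nonneg _ _)
        _ = sSup E2 * (vnormA A w * vnormA A w) := by ring
    have hsum : ∀ w : H, RCLike.re (inner ℂ (A (T w)) w : ℂ) + RCLike.re (inner ℂ (A (S w)) w : ℂ)
        = RCLike.re (inner ℂ (A ((T + S) w)) w : ℂ) := by
      intro w
      rw [add_apply, map_add, inner_add_left, map_add]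
    have bound1 : ∀ c ∈ E1, c ≤ 1 / 2 * sSup E2 := by
      rintro c ⟨x, h1, rfl⟩
      have hcon : RCLike.re (inner ℂ (A x.fst) x.fst : ℂ)
          + RCLike.re (inner ℂ (A x.snd) x.snd : ℂ) = 1 := by
        rw [vnormA, reAA, Real.sqrt_eq_one] at h1
        exact h1
      have nTv : 0 ≤ RCLike.re (inner ℂ (A (T x.snd)) x.snd : ℂ) := by
        simpa using hT.re_inner_nonneg_left x.snd
      have nTu : 0 ≤ RCLike.re (inner ℂ (A (T x.fst)) x.fst : ℂ) := by
        simpa using hT.re_inner_nonneg_left x.fst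
      have nSv : 0 ≤ RCLike.re (inner ℂ (A (S x.snd)) x.snd : ℂ) := by
        simpa using hS.re_inner_nonneg_left x.snd
      have nSu : 0 ≤ RCLike.re (inner ℂ (A (S x.fst)) x.fst : ℂ) := by
        simpa using hS.re_inner_nonneg_left x.fst
      have hTv := cs_pos hT x.snd x.fst
      have hSu := cs_pos hS x.fst x.snd
      simp only [comp_apply] at hTv hSu
      have hvs : vnormA A x.fst ^ 2 + vnormA A x.snd ^ 2 = 1 := by
        rw [vnormA_sq hA, vnormA_sq hA]; exact hcon
      have hprod : vnormA A x.snd * vnormA A x.fst ≤ 1 / 2 := by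
        nlinarith [sq_nonneg (vnormA A x.fst - vnormA A x.snd)]
      rw [innerAAM]
      calc ‖(inner ℂ (A (T x.snd)) x.fst + inner ℂ (A (S x.fst)) x.snd : ℂ)‖
          ≤ ‖(inner ℂ (A (T x.snd)) x.fst : ℂ)‖ + ‖(inner ℂ (A (S x.fst)) x.snd : ℂ)‖ :=
            norm_add_le _ _
        _ ≤ (Real.sqrt (RCLike.re (inner ℂ (A (T x.snd)) x.snd : ℂ)) *
              Real.sqrt (RCLike.re (inner ℂ (A (T x.fst)) x.fst : ℂ)))
            + (Real.sqrt (RCLike.re (inner ℂ (A (S x.fst)) x.fst : ℂ)) *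
              Real.sqrt (RCLike.re (inner ℂ (A (S x.snd)) x.snd : ℂ))) := add_le_add hTv hSu
        _ = (Real.sqrt (RCLike.re (inner ℂ (A (T x.snd)) x.snd : ℂ)) *
              Real.sqrt (RCLike.re (inner ℂ (A (T x.fst)) x.fst : ℂ)))
            + (Real.sqrt (RCLike.re (inner ℂ (A (S x.snd)) x.snd : ℂ)) *
              Real.sqrt (RCLike.re (inner ℂ (A (S x.fst)) x.fst : ℂ))) := by ring
        _ ≤ Real.sqrt (RCLike.re (inner ℂ (A (T x.snd)) x.snd : ℂ)
                + RCLike.re (inner ℂ (A (S x.snd)) x.snd : ℂ)) *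
            Real.sqrt (RCLike.re (inner ℂ (A (T x.fst)) x.fst : ℂ)
                + RCLike.re (inner ℂ (A (S x.fst)) x.fst : ℂ)) := sqrt2cs nTv nTu nSv nSu
        _ = Real.sqrt (RCLike.re (inner ℂ (A ((T + S) x.snd)) x.snd : ℂ)) *
            Real.sqrt (RCLike.re (inner ℂ (A ((T + S) x.fst)) x.fst : ℂ)) := by
            rw [hsum x.snd, hsum x.fst]
        _ ≤ Real.sqrt (sSup E2 * (vnormA A x.snd * vnormA A x.snd)) *
            Real.sqrt (sSup E2 * (vnormA A x.fst * vnormA A x.fst)) :=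
            mul_le_mul (Real.sqrt_le_sqrt (gle x.snd)) (Real.sqrt_le_sqrt (gle x.fst))
              (Real.sqrt_nonneg _) (Real.sqrt_nonneg _)
        _ = sSup E2 * (vnormA A x.snd * vnormA A x.fst) := by
            rw [Real.sqrt_mul hc2, Real.sqrt_mul hc2,
              Real.sqrt_mul_self (vnormA_nonneg _ _), Real.sqrt_mul_self (vnormA_nonneg _ _),
              show (Real.sqrt (sSup E2) * vnormA A x.snd) *
                  (Real.sqrt (sSup E2) * vnormA A x.fst)
                = (Real.sqrt (sSup E2) * Real.sqrt (sSup E2)) *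
                  (vnormA A x.snd * vnormA A x.fst) from by ring,
              Real.mul_self_sqrt hc2]
        _ ≤ sSup E2 * (1 / 2) := mul_le_mul_of_nonneg_left hprod hc2
        _ = 1 / 2 * sSup E2 := mul_comm _ _
    have E1bdd : BddAbove E1 := ⟨1 / 2 * sSup E2, bound1⟩
    have E1nonneg : ∀ c ∈ E1, 0 ≤ c := by
      rintro c ⟨x, -, rfl⟩
      exact norm_nonneg _
    have hc1 : 0 ≤ sSup E1 := Real.sSup_nonneg E1nonneg
    have bound2 : ∀ c ∈ E2, c ≤ 2 * sSup E1 := by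
      rintro c ⟨y, hy1, rfl⟩
      by_cases hb : vnormA A ((T + S) y) = 0
      · rw [hb]; positivity
      · have hbpos : 0 < vnormA A ((T + S) y) :=
          (vnormA_nonneg _ _).lt_of_ne (Ne.symm hb)
        set b := vnormA A ((T + S) y) with hbdef
        set u : H := (((b⁻¹ : ℝ)) : ℂ) • ((T + S) y) with hudef
        have hu1 : vnormA A u = 1 := by
          rw [hudef, vnormA_smul, Complex.norm_real, Real.norm_eq_abs, abs_of_pos (inv_pos.2 hbpos),
            ← hbdef, inv_mul_cancel₀ (ne_of_gt hbpos)]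
        set s : ℝ := (Real.sqrt 2)⁻¹ with hsdef
        have hspos : 0 < s := by rw [hsdef]; positivity
        have hs2 : s ^ 2 = 1 / 2 := by
          rw [hsdef, inv_pow, Real.sq_sqrt (by norm_num : (0:ℝ) ≤ 2)]
          norm_num
        set x : WithLp 2 (H × H) := pairL2 ((s : ℂ) • u) ((s : ℂ) • y) with hxdef
        have hxfst : x.fst = (s : ℂ) • u := rfl
        have hxsnd : x.snd = (s : ℂ) • y := rfl
        have hx1 : vnormA (AA A) x = 1 := by
          rw [vnormA, reAA, hxfst, hxsnd, ← vnormA_sq hA ((s : ℂ) • u),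
            ← vnormA_sq hA ((s : ℂ) • y), vnormA_smul A (s : ℂ) u, vnormA_smul A (s : ℂ) y,
            hu1, hy1, Complex.norm_real, Real.norm_eq_abs, abs_of_pos hspos]
          rw [show (s * 1) ^ 2 + (s * 1) ^ 2 = 2 * s ^ 2 from by ring, hs2]
          norm_num
        have hmem : ‖(inner ℂ ((AA A) ((blk 0 T S 0) x)) x : ℂ)‖ ∈ E1 :=
          ⟨x, hx1, rfl⟩
        have hle := le_csSup E1bdd hmem
        have hval : b ≤ 2 * ‖(inner ℂ ((AA A) ((blk 0 T S 0) x)) x : ℂ)‖ := by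
          rw [innerAAM]
          have hpull : (inner ℂ (A (T x.snd)) x.fst : ℂ) + inner ℂ (A (S x.fst)) x.snd
              = ((s ^ 2 : ℝ) : ℂ) * ((inner ℂ (A (T y)) u : ℂ) + inner ℂ (A (S u)) y) := by
            rw [hxfst, hxsnd]
            simp only [map_smul, inner_smul_left, inner_smul_right, Complex.conj_ofReal]
            push_cast
            ring
          rw [hpull, norm_mul, Complex.norm_real, Real.norm_eq_abs, abs_of_nonneg (sq_nonneg s),
            hs2]
          have hre : RCLike.re ((inner ℂ (A (T y)) u : ℂ) + inner ℂ (A (S u)) y) = b := by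
            have hSsym : (inner ℂ (A (S u)) y : ℂ) = inner ℂ u (A (S y)) := by
              have h := hS.1 u y
              simpa [comp_apply] using h
            have e2 : RCLike.re ((inner ℂ (A (T y)) u : ℂ) + inner ℂ (A (S u)) y)
                = RCLike.re (inner ℂ (A (T y)) u : ℂ) + RCLike.re (inner ℂ (A (S y)) u : ℂ) := by
              rw [map_add, hSsym, inner_re_symm u (A (S y))]
            have e3 : RCLike.re (inner ℂ (A (T y)) u : ℂ) + RCLike.re (inner ℂ (A (S y)) u : ℂ)
                = RCLike.re (inner ℂ (A ((T + S) y)) u : ℂ) := by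
              rw [← map_add]
              congr 1
              rw [add_apply, map_add, inner_add_left]
            have e4 : (inner ℂ (A ((T + S) y)) u : ℂ)
                = ((b⁻¹ : ℝ) : ℂ) * inner ℂ (A ((T + S) y)) ((T + S) y) := by
              rw [hudef, inner_smul_right]
            have e5 : RCLike.re (inner ℂ (A ((T + S) y)) ((T + S) y) : ℂ) = b ^ 2 := by
              rw [← vnormA_sq hA, ← hbdef]
            rw [e2, e3, e4,
              show RCLike.re (((b⁻¹ : ℝ) : ℂ) * (inner ℂ (A ((T + S) y)) ((T + S) y) : ℂ))
                = b⁻¹ * RCLike.re (inner ℂ (A ((T + S) y)) ((T + S) y) : ℂ) from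
                Complex.re_ofReal_mul _ _, e5]
            field_simp
          have habs : RCLike.re ((inner ℂ (A (T y)) u : ℂ) + inner ℂ (A (S u)) y)
              ≤ ‖((inner ℂ (A (T y)) u : ℂ) + inner ℂ (A (S u)) y)‖ := by
                        exact RCLike.re_le_norm _
          rw [hre] at habs
          linarith
        linarith
    have hE1le : sSup E1 ≤ 1 / 2 * sSup E2 := Real.sSup_le bound1 (by positivity)
    have hE2le : sSup E2 ≤ 2 * sSup E1 := Real.sSup_le bound2 (by positivity)
    linarith
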